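/- Let p ∈ (0,1)^n, let λ₁ = (Σ_{i=1}^n (1−p_i)/p_i)^{-1}, and define the mixed Hider strategy x by x_i = λ₁ (1−p_i)/p_i. Then for every search σ, the expected payoff satisfies Σ_{i=1}^n x_{σ(i)} ∏_{j=1}^i p_{σ(j)} = λ₁ (1 − ∏_{i=1}^n p_i). -/

import Mathlib

/-- against the Hider strategy `x_i = λ₁(1−p_i)/p_i`, every search has
expected payoff `λ₁(1 − ∏_i p_i)`, where `λ₁ = (Σ_i (1−p_i)/p_i)⁻¹`. -/
theorem equalizing_hider_value
    {n : ℕ} (p : Fin n → ℝ) (hp : ∀ i, 0 < p i ∧ p i < 1)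
    (σ : Equiv.Perm (Fin n)) :
    ∑ i : Fin n,
        ((∑ r : Fin n, (1 - p r) / p r)⁻¹ * ((1 - p (σ i)) / p (σ i))) *
          ∏ j ∈ Finset.univ.filter (fun t : Fin n => t ≤ i), p (σ j) =
      (∑ r : Fin n, (1 - p r) / p r)⁻¹ * (1 - ∏ i : Fin n, p i) := by
  set L := (∑ r : Fin n, (1 - p r) / p r)⁻¹ with hL
  set F : ℕ → ℝ := fun k => ∏ j ∈ Finset.univ.filter (fun t : Fin n => (t : ℕ) < k), p (σ j)
    with hF
  have key : ∀ i : Fin n,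
      (L * ((1 - p (σ i)) / p (σ i))) *
        ∏ j ∈ Finset.univ.filter (fun t : Fin n => t ≤ i), p (σ j)
      = L * (F i - F (i + 1)) := by
    intro i
    have hpi : p (σ i) ≠ 0 := (hp (σ i)).1.ne'
    have h1 : Finset.univ.filter (fun t : Fin n => t ≤ i)
        = insert i (Finset.univ.filter (fun t : Fin n => (t : ℕ) < i)) := by
      ext t
      simp only [Finset.mem_filter, Finset.mem_univ, true_and, Finset.mem_insert,
        Fin.le_def, Fin.ext_iff]
      omega
    have h2 : Finset.univ.filter (fun t : Fin n => (t : ℕ) < (i : ℕ) + 1)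
        = insert i (Finset.univ.filter (fun t : Fin n => (t : ℕ) < i)) := by
      ext t
      simp only [Finset.mem_filter, Finset.mem_univ, true_and, Finset.mem_insert,
        Fin.ext_iff]
      omega
    have hnot : i ∉ Finset.univ.filter (fun t : Fin n => (t : ℕ) < i) := by simp
    set A := ∏ j ∈ Finset.univ.filter (fun t : Fin n => (t : ℕ) < (i : ℕ)), p (σ j) with hA
    have hFi : F (i : ℕ) = A := rfl
    have hF1 : F ((i : ℕ) + 1) = p (σ i) * A := by
      simp only [hF]; rw [h2, Finset.prod_insert hnot]
    rw [h1, Finset.prod_insert hnot, hF1, hFi, ← hA]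
    field_simp
  rw [Finset.sum_congr rfl fun i _ => key i, ← Finset.mul_sum]
  have hsum : ∑ i : Fin n, (F i - F ((i : ℕ) + 1)) = F 0 - F n := by
    rw [Fin.sum_univ_eq_sum_range (fun k => F k - F (k + 1))]
    exact Finset.sum_range_sub' F n
  rw [hsum]
  have hF0 : F 0 = 1 := by simp [hF]
  have hFn : F n = ∏ i : Fin n, p i := by
    simp only [hF]
    have : Finset.univ.filter (fun t : Fin n => (t : ℕ) < n) = Finset.univ := by
      ext t; simp [t.isLt]
    rw [this]
    exact Equiv.prod_comp σ p
  rw [hF0, hFn]
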